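/- arXiv:2006.00353 — 2 statements merged into one kernel-verified Lean document; each statement's English description precedes it below -/
import Mathlib

section
/- Let G be a finite group of order v with nontrivial center, and let (v,k,λ,μ) be parameters of a non-conference strongly regular graph with integer eigenvalues ν₂ > ν₃ such that ν₂ − ν₃ divides neither μ − ν₃(ν₂+1) nor v − 2k + λ − ν₃(ν₂+1). Then G contains no regular (v,k,λ,μ)-partial difference set; equivalently, G cannot act regularly on the vertex set of a (v,k,λ,μ)-strongly regular graph. -/
open Matrix Polynomial Finset

/-! ### Auxiliary lemmas -/

section TraceInt

lemma PDSaux.eval_charpoly_eq_det {n : Type*} [Fintype n] [DecidableEq n] {R : Type*} [CommRing R]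
    (M : Matrix n n R) (r : R) :
    M.charpoly.eval r = (Matrix.scalar n r - M).det := by
  rw [Matrix.charpoly, _root_.eval_det, matPolyEquiv_charmatrix]
  simp

/-- If a rational square matrix satisfies `M ^ (N+1) = M` with `N ≥ 1`, then its trace is an
integer (its eigenvalues are roots of `X^(N+1) - X`, hence algebraic integers). -/
lemma PDSaux.trace_int_of_pow {n : Type*} [Fintype n] [DecidableEq n]
    (M : Matrix n n ℚ) (N : ℕ) (hN : 1 ≤ N) (h : M ^ (N + 1) = M) :
    ∃ t : ℤ, M.trace = (t : ℚ) := by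
  set f := algebraMap ℚ ℂ
  set M' : Matrix n n ℂ := f.mapMatrix M with hM'
  have hmap : M' ^ (N + 1) = M' := by
    rw [hM', ← map_pow, h]
  have htr : M'.trace = f M.trace := by
    simp [Matrix.trace, hM', Matrix.map_apply, map_sum]
  have hroot : ∀ α ∈ M'.charpoly.roots, IsIntegral ℤ α := by
    intro α hα
    have hev : M'.charpoly.eval α = 0 := Polynomial.isRoot_of_mem_roots hα
    rw [PDSaux.eval_charpoly_eq_det] at hev
    obtain ⟨w, hw0, hw⟩ := Matrix.exists_mulVec_eq_zero_iff.2 hev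
    have hsc : ∀ (β : ℂ) (u : n → ℂ), (Matrix.scalar n β) *ᵥ u = β • u := by
      intro β u; ext i
      simp [Matrix.mulVec, Matrix.scalar, dotProduct, Matrix.diagonal,
        Finset.sum_ite_eq, mul_comm]
    have hMv : M' *ᵥ w = α • w := by
      have h1 : (Matrix.scalar n α) *ᵥ w - M' *ᵥ w = 0 := by
        rw [← Matrix.sub_mulVec, hw]
      rw [hsc] at h1
      rw [sub_eq_zero] at h1
      exact h1.symm
    have hpow : ∀ r : ℕ, (M' ^ r) *ᵥ w = α ^ r • w := by
      intro r; induction r with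
      | zero => simp
      | succ r ih =>
        rw [pow_succ, pow_succ, ← Matrix.mulVec_mulVec, hMv, Matrix.mulVec_smul, ih,
          smul_smul, mul_comm]
    have heq : α ^ (N + 1) = α := by
      have h1 := hpow (N + 1)
      rw [hmap, hMv] at h1
      obtain ⟨i, hi⟩ := Function.ne_iff.1 hw0
      have := congrFun h1 i
      simp only [Pi.smul_apply, smul_eq_mul] at this
      exact mul_right_cancel₀ hi this.symm
    refine ⟨X ^ (N + 1) - X, ?_, ?_⟩
    · apply Polynomial.monic_X_pow_sub
      rw [Polynomial.degree_X]
      exact_mod_cast Nat.lt_succ_of_le hN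
    · simp [heq, sub_eq_zero]
  have hsum : IsIntegral ℤ M'.charpoly.roots.sum := by
    generalize M'.charpoly.roots = s at hroot
    induction s using Multiset.induction with
    | empty => simpa using isIntegral_zero
    | cons a s ih =>
      simp only [Multiset.sum_cons]
      exact (hroot a (Multiset.mem_cons_self a s)).add
        (ih fun α hα => hroot α (Multiset.mem_cons_of_mem hα))
  have htr2 : M'.trace = M'.charpoly.roots.sum := Matrix.trace_eq_sum_roots_charpoly M'
  rw [htr2] at htr
  have : IsIntegral ℤ M.trace := by
    rw [← isIntegral_algebraMap_iff (algebraMap ℚ ℂ).injective]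
    rw [htr] at hsum
    exact hsum
  obtain ⟨t, ht⟩ := IsIntegrallyClosed.isIntegral_iff.1 this
  exact ⟨t, ht.symm⟩

end TraceInt

namespace PDSaux

variable {G : Type*} [Group G] [Fintype G] [DecidableEq G]

omit [Fintype G] in
lemma fiber_one (S : Finset G) :
    ((S ×ˢ S).filter fun p => p.1 * p.2⁻¹ = 1).card = S.card := by
  apply Finset.card_bij (fun p _ => p.1)
  · intro p hp
    simp only [Finset.mem_filter, Finset.mem_product] at hp
    exact hp.1.1
  · intro p hp q hq h
    simp only [Finset.mem_filter, Finset.mem_product, mul_inv_eq_one] at hp hq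
    ext
    · exact h
    · rw [← hp.2, ← hq.2, h]
  · intro a ha
    exact ⟨(a, a), by simp [ha], rfl⟩

lemma fiber_count (S : Finset G) (hsym : ∀ s : G, s ∈ S ↔ s⁻¹ ∈ S) (x y : G) :
    (Finset.univ.filter fun t : G => x * t⁻¹ ∈ S ∧ t * y⁻¹ ∈ S).card
      = ((S ×ˢ S).filter fun p => p.1 * p.2⁻¹ = x * y⁻¹).card := by
  apply Finset.card_bij (fun t _ => (x * t⁻¹, y * t⁻¹))
  · intro t ht
    simp only [Finset.mem_filter, Finset.mem_univ, true_and] at ht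
    simp only [Finset.mem_filter, Finset.mem_product]
    refine ⟨⟨ht.1, ?_⟩, by group⟩
    rw [hsym]
    simpa using ht.2
  · intro a _ b _ h
    have := congrArg Prod.fst h
    simpa using this
  · intro p hp
    simp only [Finset.mem_filter, Finset.mem_product] at hp
    have hpp : p.1 = x * y⁻¹ * p.2 := by rw [← hp.2]; group
    have h1 : x * (p.1⁻¹ * x)⁻¹ = p.1 := by group
    have h2 : y * (p.1⁻¹ * x)⁻¹ = p.2 := by rw [hpp]; group
    have h3 : p.1⁻¹ * x * y⁻¹ = p.2⁻¹ := by rw [hpp]; group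
    refine ⟨p.1⁻¹ * x, ?_, ?_⟩
    · simp only [Finset.mem_filter, Finset.mem_univ, true_and]
      rw [h1, h3]
      exact ⟨hp.1.1, (hsym _).1 hp.1.2⟩
    · exact Prod.ext h1 h2

lemma count_identity (S : Finset G) (v k l m : ℕ)
    (hv : Fintype.card G = v) (hk : S.card = k) (h1 : (1 : G) ∉ S)
    (hl : ∀ g ∈ S, ((S ×ˢ S).filter (fun p => p.1 * p.2⁻¹ = g)).card = l)
    (hm : ∀ g : G, g ∉ S → g ≠ 1 →
      ((S ×ˢ S).filter (fun p => p.1 * p.2⁻¹ = g)).card = m) :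
    (k : ℚ) ^ 2 = k + l * k + m * ((v : ℚ) - 1 - k) := by
  classical
  have hsum : (S ×ˢ S).card
      = ∑ g : G, ((S ×ˢ S).filter fun p => p.1 * p.2⁻¹ = g).card :=
    Finset.card_eq_sum_card_fiberwise (fun p _ => Finset.mem_univ _)
  have hins : (1 : G) ∉ S := h1
  have hsplit : ∑ g ∈ insert (1 : G) S, ((S ×ˢ S).filter fun p => p.1 * p.2⁻¹ = g).card
      + ∑ g ∈ (insert (1 : G) S)ᶜ, ((S ×ˢ S).filter fun p => p.1 * p.2⁻¹ = g).card
      = ∑ g : G, ((S ×ˢ S).filter fun p => p.1 * p.2⁻¹ = g).card :=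
    Finset.sum_add_sum_compl _ _
  have e1 : ∑ g ∈ insert (1 : G) S, ((S ×ˢ S).filter fun p => p.1 * p.2⁻¹ = g).card
      = k + l * k := by
    rw [Finset.sum_insert hins, fiber_one S, hk]
    congr 1
    rw [Finset.sum_congr rfl (fun g hg => hl g hg), Finset.sum_const, hk, smul_eq_mul,
      mul_comm]
  have e2 : ∑ g ∈ (insert (1 : G) S)ᶜ, ((S ×ˢ S).filter fun p => p.1 * p.2⁻¹ = g).card
      = m * (v - (k + 1)) := by
    have hc : ∀ g ∈ (insert (1 : G) S)ᶜ,
        ((S ×ˢ S).filter fun p => p.1 * p.2⁻¹ = g).card = m := by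
      intro g hg
      simp only [Finset.mem_compl, Finset.mem_insert, not_or] at hg
      exact hm g hg.2 hg.1
    rw [Finset.sum_congr rfl hc, Finset.sum_const, smul_eq_mul, mul_comm]
    congr 1
    rw [Finset.card_compl, Finset.card_insert_of_notMem hins, hk, hv]
  have hcard : (S ×ˢ S).card = k * k := by rw [Finset.card_product, hk]
  have hle : k + 1 ≤ v := by
    rw [← hv, ← hk, ← Finset.card_insert_of_notMem hins]
    exact Finset.card_le_univ _
  have hmain : k * k = k + l * k + m * (v - (k + 1)) := by
    rw [← hcard, hsum, ← hsplit, e1, e2]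
  have := congrArg (fun n : ℕ => (n : ℚ)) hmain
  push_cast [Nat.cast_sub hle] at this
  rw [pow_two, this]
  ring

/-- The adjacency matrix of the Cayley graph `Cay(G,S)`. -/
def adjA (S : Finset G) : Matrix G G ℚ := Matrix.of fun x y => if x * y⁻¹ ∈ S then 1 else 0

/-- The all-ones matrix. -/
def matJ (G : Type*) [Fintype G] : Matrix G G ℚ := Matrix.of fun _ _ => 1

/-- The permutation matrix of left translation by `z`. -/
def permP (z : G) : Matrix G G ℚ := Matrix.of fun x y => if z⁻¹ * x = y then 1 else 0

lemma adjA_mul_adjA (S : Finset G) (k l m : ℕ) (hk : S.card = k) (h1 : (1 : G) ∉ S)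
    (hsym : ∀ s : G, s ∈ S ↔ s⁻¹ ∈ S)
    (hl : ∀ g ∈ S, ((S ×ˢ S).filter (fun p => p.1 * p.2⁻¹ = g)).card = l)
    (hm : ∀ g : G, g ∉ S → g ≠ 1 →
      ((S ×ˢ S).filter (fun p => p.1 * p.2⁻¹ = g)).card = m) :
    adjA S * adjA S
      = ((k : ℚ) - m) • (1 : Matrix G G ℚ) + ((l : ℚ) - m) • adjA S + (m : ℚ) • matJ G := by
  ext x y
  have hlhs : (adjA S * adjA S) x y
      = (((S ×ˢ S).filter fun p => p.1 * p.2⁻¹ = x * y⁻¹).card : ℚ) := by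
    rw [mul_apply]
    simp only [adjA, Matrix.of_apply, ite_mul, one_mul, zero_mul, ← ite_and]
    rw [Finset.sum_boole, ← fiber_count S hsym x y]
  rw [hlhs]
  simp only [Matrix.add_apply, Matrix.smul_apply, Matrix.one_apply, adjA, matJ,
    Matrix.of_apply, smul_eq_mul, mul_ite, mul_one, mul_zero]
  by_cases hxy : x = y
  · subst hxy
    rw [if_pos rfl, mul_inv_cancel]
    rw [if_neg h1, fiber_one S, hk]
    ring
  · have hne : x * y⁻¹ ≠ 1 := by
      simpa [mul_inv_eq_one] using hxy
    rw [if_neg hxy]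
    by_cases hmem : x * y⁻¹ ∈ S
    · rw [if_pos hmem, hl _ hmem]; ring
    · rw [if_neg hmem, hm _ hmem hne]; ring

lemma row_count (S : Finset G) (x : G) :
    (Finset.univ.filter fun t : G => x * t⁻¹ ∈ S).card = S.card := by
  apply Finset.card_bij (fun t _ => x * t⁻¹)
  · intro t ht; simpa using ht
  · intro a _ b _ h
    simpa using h
  · intro a ha
    refine ⟨a⁻¹ * x, ?_, by group⟩
    simp only [Finset.mem_filter, Finset.mem_univ, true_and]
    have : x * (a⁻¹ * x)⁻¹ = a := by group
    rw [this]; exact ha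

lemma col_count (S : Finset G) (y : G) :
    (Finset.univ.filter fun t : G => t * y⁻¹ ∈ S).card = S.card := by
  apply Finset.card_bij (fun t _ => t * y⁻¹)
  · intro t ht; simpa using ht
  · intro a _ b _ h
    simpa using h
  · intro a ha
    refine ⟨a * y, ?_, by group⟩
    simp only [Finset.mem_filter, Finset.mem_univ, true_and, mul_inv_cancel_right]
    exact ha

lemma adjA_mul_matJ (S : Finset G) (k : ℕ) (hk : S.card = k) :
    adjA S * matJ G = (k : ℚ) • matJ G := by
  ext x y
  rw [mul_apply]
  simp only [adjA, matJ, Matrix.of_apply, mul_one, Matrix.smul_apply, smul_eq_mul]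
  rw [Finset.sum_boole, row_count S x, hk]

lemma matJ_mul_adjA (S : Finset G) (k : ℕ) (hk : S.card = k) :
    matJ G * adjA S = (k : ℚ) • matJ G := by
  ext x y
  rw [mul_apply]
  simp only [adjA, matJ, Matrix.of_apply, one_mul, Matrix.smul_apply, smul_eq_mul]
  rw [Finset.sum_boole, col_count S y, hk, mul_one]

omit [Group G] [DecidableEq G] in
lemma matJ_mul_matJ (v : ℕ) (hv : Fintype.card G = v) :
    matJ G * matJ G = (v : ℚ) • matJ G := by
  ext x y
  rw [mul_apply]
  simp only [matJ, Matrix.of_apply, one_mul, Finset.sum_const, Finset.card_univ, hv,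
    Matrix.smul_apply, nsmul_eq_mul, smul_eq_mul, mul_one]

lemma permP_mul (z w : G) : permP z * permP w = permP (z * w) := by
  ext x y
  rw [mul_apply]
  simp only [permP, Matrix.of_apply, ite_mul, one_mul, zero_mul,
    Finset.sum_ite_eq, Finset.mem_univ, if_pos]
  have h : (z * w)⁻¹ * x = w⁻¹ * (z⁻¹ * x) := by group
  rw [h]

lemma permP_one : permP (1 : G) = 1 := by
  ext x y
  simp [permP, Matrix.one_apply]

lemma permP_pow (z : G) (r : ℕ) : permP z ^ r = permP (z ^ r) := by
  induction r with
  | zero => simp [permP_one]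
  | succ r ih => rw [pow_succ, ih, permP_mul, ← pow_succ]

lemma permP_mul_left (z : G) (M : Matrix G G ℚ) (x y : G) :
    (permP z * M) x y = M (z⁻¹ * x) y := by
  rw [mul_apply]
  simp only [permP, Matrix.of_apply, ite_mul, one_mul, zero_mul,
    Finset.sum_ite_eq, Finset.mem_univ, if_pos]

lemma permP_mul_adjA (S : Finset G) (z : G) (hz : z ∈ Subgroup.center G) :
    permP z * adjA S = adjA S * permP z := by
  ext x y
  rw [permP_mul_left, mul_apply]
  have hcond : ∀ t : G, (z⁻¹ * t = y) = (t = z * y) := by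
    intro t
    apply propext
    constructor
    · intro h; rw [← h]; group
    · intro h; rw [h]; group
  simp only [permP, adjA, Matrix.of_apply, hcond, mul_ite, mul_one, mul_zero,
    Finset.sum_ite_eq', Finset.mem_univ, if_pos]
  have hz' := Subgroup.mem_center_iff.mp (Subgroup.inv_mem _ hz) (x * y⁻¹)
  have key : x * (z * y)⁻¹ = z⁻¹ * x * y⁻¹ := by
    have h1 : x * (z * y)⁻¹ = x * y⁻¹ * z⁻¹ := by group
    rw [h1, hz']
    exact (mul_assoc _ _ _).symm
  rw [key]

lemma permP_mul_matJ (z : G) : permP z * matJ G = matJ G := by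
  ext x y
  rw [permP_mul_left]
  simp [matJ]

lemma matJ_mul_permP (z : G) : matJ G * permP z = matJ G := by
  ext x y
  rw [mul_apply]
  have hcond : ∀ t : G, (z⁻¹ * t = y) = (t = z * y) := by
    intro t
    apply propext
    constructor
    · intro h; rw [← h]; group
    · intro h; rw [h]; group
  simp only [permP, matJ, Matrix.of_apply, hcond, one_mul, Finset.sum_ite_eq',
    Finset.mem_univ, if_pos]

lemma trace_permP_mul (z : G) (M : Matrix G G ℚ) :
    (permP z * M).trace = ∑ x : G, M (z⁻¹ * x) x := by
  unfold Matrix.trace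
  simp only [Matrix.diag]
  exact Finset.sum_congr rfl fun x _ => permP_mul_left z M x x

lemma trace_permP_mul_adjA (S : Finset G) (v : ℕ) (hv : Fintype.card G = v)
    (hsym : ∀ s : G, s ∈ S ↔ s⁻¹ ∈ S) (z : G) :
    (permP z * adjA S).trace = if z ∈ S then (v : ℚ) else 0 := by
  rw [trace_permP_mul]
  have : ∀ x : G, adjA S (z⁻¹ * x) x = if z ∈ S then (1 : ℚ) else 0 := by
    intro x
    simp only [adjA, Matrix.of_apply, mul_inv_cancel_right]
    by_cases hzS : z ∈ S
    · rw [if_pos ((hsym z).mp hzS), if_pos hzS]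
    · rw [if_neg (fun hc => hzS ((hsym z).mpr hc)), if_neg hzS]
  rw [Finset.sum_congr rfl fun x _ => this x, Finset.sum_const, Finset.card_univ, hv]
  by_cases hzS : z ∈ S <;> simp [hzS]

lemma trace_permP (z : G) (hz1 : z ≠ 1) : (permP z).trace = 0 := by
  unfold Matrix.trace
  simp only [Matrix.diag, permP, Matrix.of_apply]
  rw [Finset.sum_eq_zero]
  intro x _
  rw [if_neg]
  intro hc
  exact hz1 (by simpa [inv_eq_one] using (mul_eq_right.mp hc))

lemma trace_permP_mul_matJ (v : ℕ) (hv : Fintype.card G = v) (z : G) :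
    (permP z * matJ G).trace = (v : ℚ) := by
  rw [permP_mul_matJ]
  unfold Matrix.trace
  simp [Matrix.diag, matJ, Finset.card_univ, hv]

/-- The key divisibility: for a central `z ≠ 1`,
`(ν₂ - ν₃) ∣ (if z ∈ S then v else 0) - (k - ν₃)`. -/
lemma key_dvd (S : Finset G) (v k l m : ℕ) (ν₂ ν₃ : ℤ)
    (hv : Fintype.card G = v) (hk : S.card = k) (h1 : (1 : G) ∉ S)
    (hsym : ∀ s : G, s ∈ S ↔ s⁻¹ ∈ S)
    (hl : ∀ g ∈ S, ((S ×ˢ S).filter (fun p => p.1 * p.2⁻¹ = g)).card = l)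
    (hm : ∀ g : G, g ∉ S → g ≠ 1 →
      ((S ×ˢ S).filter (fun p => p.1 * p.2⁻¹ = g)).card = m)
    (hsum2 : ν₂ + ν₃ = (l : ℤ) - m) (hprod : ν₂ * ν₃ = (m : ℤ) - k)
    (hne : ν₂ ≠ ν₃) (z : G) (hz : z ∈ Subgroup.center G) (hz1 : z ≠ 1) :
    (ν₂ - ν₃) ∣ ((if z ∈ S then (v : ℤ) else 0) - ((k : ℤ) - ν₃)) := by
  classical
  have hv0 : (0 : ℕ) < v := hv ▸ Fintype.card_pos
  have hvq : (v : ℚ) ≠ 0 := by positivity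
  have hdq : ((ν₂ : ℚ) - ν₃) ≠ 0 := by
    intro hc
    exact hne (by exact_mod_cast sub_eq_zero.mp hc)
  set dq : ℚ := (ν₂ : ℚ) - ν₃ with hdq_def
  set c : ℚ := ((k : ℚ) - ν₃) / v with hc_def
  set A := adjA S with hA_def
  set J := matJ G with hJ_def
  set P := permP z with hP_def
  have hsq : (ν₂ : ℚ) + ν₃ = (l : ℚ) - m := by exact_mod_cast hsum2
  have hpq : (ν₂ : ℚ) * ν₃ = (m : ℚ) - k := by exact_mod_cast hprod
  have hcid : (k : ℚ) ^ 2 = k + l * k + m * ((v : ℚ) - 1 - k) :=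
    count_identity S v k l m hv hk h1 hl hm
  have hAA := adjA_mul_adjA S k l m hk h1 hsym hl hm
  have hAJ := adjA_mul_matJ S k hk
  have hJA := matJ_mul_adjA S k hk
  have hJJ := matJ_mul_matJ (G := G) v hv
  set B : Matrix G G ℚ := A - (ν₃ : ℚ) • (1 : Matrix G G ℚ) - c • J with hB_def
  have hBB : B * B = dq • B := by
    rw [hB_def]
    simp only [Matrix.sub_mul, Matrix.mul_sub, Matrix.smul_mul, Matrix.mul_smul,
      Matrix.one_mul, Matrix.mul_one, smul_smul]
    rw [hAA, hAJ, hJA, hJJ]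
    have hcv : c * (v : ℚ) = (k : ℚ) - ν₃ := by
      rw [hc_def]; field_simp
    have hkey : (c * c) * (v : ℚ) = c * ((k : ℚ) - ν₃) := by
      rw [mul_assoc, hcv]
    have hmv : (m : ℚ) * v = ((k : ℚ) - ν₂) * ((k : ℚ) - ν₃) := by
      linear_combination (k : ℚ) * hsq - hcid - hpq
    match_scalars
    · linear_combination hpq
    · linear_combination -hsq
    · rw [hc_def]
      field_simp
      rw [hdq_def]
      linear_combination hmv
  have hcv : c * (v : ℚ) = (k : ℚ) - ν₃ := by
    rw [hc_def]; field_simp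
  set E : Matrix G G ℚ := dq⁻¹ • B with hE_def
  have hEE : E * E = E := by
    rw [hE_def, Matrix.smul_mul, Matrix.mul_smul, hBB, smul_smul, smul_smul]
    congr 1
    field_simp
  have hPB : P * B = B * P := by
    rw [hB_def]
    simp only [Matrix.mul_sub, Matrix.sub_mul, Matrix.mul_smul, Matrix.smul_mul,
      Matrix.mul_one, Matrix.one_mul]
    rw [hP_def, hA_def, hJ_def, permP_mul_adjA S z hz, permP_mul_matJ, matJ_mul_permP]
  have hPE : Commute P E := by
    unfold Commute SemiconjBy
    rw [hE_def, Matrix.mul_smul, Matrix.smul_mul, hPB]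
  set N := orderOf z with hN_def
  have hN1 : 1 ≤ N := orderOf_pos z
  have hPN : P ^ N = 1 := by rw [hP_def, permP_pow, pow_orderOf_eq_one, permP_one]
  have hX : (P * E) ^ (N + 1) = P * E := by
    rw [hPE.mul_pow, IsIdempotentElem.pow_succ_eq N hEE, pow_succ, hPN, one_mul]
  obtain ⟨t, ht⟩ := PDSaux.trace_int_of_pow (P * E) N hN1 hX
  have htr : (P * E).trace = dq⁻¹ * ((if z ∈ S then (v : ℚ) else 0) - ((k : ℚ) - ν₃)) := by
    rw [hE_def, Matrix.mul_smul, Matrix.trace_smul, hB_def]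
    rw [Matrix.mul_sub, Matrix.mul_sub, Matrix.mul_smul, Matrix.mul_smul, Matrix.mul_one]
    rw [Matrix.trace_sub, Matrix.trace_sub, Matrix.trace_smul, Matrix.trace_smul]
    rw [hP_def, hA_def, hJ_def, trace_permP_mul_adjA S v hv hsym z, trace_permP z hz1,
      trace_permP_mul_matJ v hv z]
    rw [smul_eq_mul, smul_eq_mul, smul_eq_mul, ← hcv]
    ring
  rw [htr] at ht
  have heq : (if z ∈ S then (v : ℚ) else 0) - ((k : ℚ) - ν₃) = dq * t := by
    have h2 := ht
    field_simp at h2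
    linear_combination h2
  refine ⟨t, ?_⟩
  by_cases hzS : z ∈ S
  · rw [if_pos hzS] at heq ⊢
    have hq : (((v : ℤ) - ((k : ℤ) - ν₃) : ℤ) : ℚ) = (((ν₂ - ν₃) * t : ℤ) : ℚ) := by
      push_cast
      rw [hdq_def] at heq
      linear_combination heq
    exact_mod_cast hq
  · rw [if_neg hzS] at heq ⊢
    have hq : (((0 : ℤ) - ((k : ℤ) - ν₃) : ℤ) : ℚ) = (((ν₂ - ν₃) * t : ℤ) : ℚ) := by
      push_cast
      rw [hdq_def] at heq
      linear_combination heq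
    exact_mod_cast hq

end PDSaux

/-- `S` is a regular `(v,k,λ,μ)`-partial difference set in the finite group `G`:
`|G| = v`, `|S| = k`, `1 ∉ S`, `S = S⁻¹`, and every nonidentity element `g` has
exactly `λ` representations `g = a * b⁻¹` with `a, b ∈ S` if `g ∈ S`, and exactly
`μ` such representations if `g ∉ S`. -/
def IsRegularPDS {G : Type*} [Group G] [Fintype G] [DecidableEq G]
    (S : Finset G) (v k l m : ℕ) : Prop :=
  Fintype.card G = v ∧ S.card = k ∧ (1 : G) ∉ S ∧ (∀ s : G, s ∈ S ↔ s⁻¹ ∈ S) ∧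
    (∀ g ∈ S, ((S ×ˢ S).filter (fun p => p.1 * p.2⁻¹ = g)).card = l) ∧
    (∀ g : G, g ∉ S → g ≠ 1 → ((S ×ˢ S).filter (fun p => p.1 * p.2⁻¹ = g)).card = m)

/-- Let `G` be a finite group of order `v` with nontrivial center, and let
`(v,k,λ,μ)` be parameters of a non-conference strongly regular graph with integer
eigenvalues `ν₂ > ν₃` such that `ν₂ - ν₃` divides neither `μ - ν₃(ν₂+1)` nor
`v - 2k + λ - ν₃(ν₂+1)`.  Then `G` contains no regular `(v,k,λ,μ)`-partial
difference set. -/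
theorem no_pds_of_nontrivial_center {G : Type*} [Group G] [Fintype G] [DecidableEq G]
    (v k l m : ℕ) (ν₂ ν₃ : ℤ)
    (hv : Fintype.card G = v)
    (hZ : Nontrivial (Subgroup.center G))
    (hconf : ¬ (2 * (k : ℤ) = (v : ℤ) - 1 ∧ 4 * (l : ℤ) = (v : ℤ) - 5 ∧
      4 * (m : ℤ) = (v : ℤ) - 1))
    (hν₂ : (ν₂ : ℝ) = ((l : ℝ) - m + Real.sqrt (((l : ℝ) - m) ^ 2 + 4 * ((k : ℝ) - m))) / 2)
    (hν₃ : (ν₃ : ℝ) = ((l : ℝ) - m - Real.sqrt (((l : ℝ) - m) ^ 2 + 4 * ((k : ℝ) - m))) / 2)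
    (h23 : ν₂ > ν₃)
    (hd1 : ¬ (ν₂ - ν₃ ∣ (m : ℤ) - ν₃ * (ν₂ + 1)))
    (hd2 : ¬ (ν₂ - ν₃ ∣ (v : ℤ) - 2 * k + l - ν₃ * (ν₂ + 1))) :
    ¬ ∃ S : Finset G, IsRegularPDS S v k l m := by
  rintro ⟨S, hSv, hSk, hS1, hSsym, hSl, hSm⟩
  -- a nontrivial central element
  obtain ⟨z₀, hz₀⟩ := exists_ne (1 : Subgroup.center G)
  set z : G := (z₀ : G) with hz_def
  have hz : z ∈ Subgroup.center G := z₀.2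
  have hz1 : z ≠ 1 := by
    intro hc
    exact hz₀ (Subtype.ext hc)
  -- eigenvalue identities
  have hgt : (ν₃ : ℝ) < ν₂ := by exact_mod_cast h23
  have hs : Real.sqrt (((l : ℝ) - m) ^ 2 + 4 * ((k : ℝ) - m)) = (ν₂ : ℝ) - ν₃ := by
    rw [hν₂, hν₃]; ring
  have hspos : 0 < Real.sqrt (((l : ℝ) - m) ^ 2 + 4 * ((k : ℝ) - m)) := by
    rw [hs]; linarith
  have hΔpos : 0 < ((l : ℝ) - m) ^ 2 + 4 * ((k : ℝ) - m) := Real.sqrt_pos.mp hspos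
  have hsq2 : Real.sqrt (((l : ℝ) - m) ^ 2 + 4 * ((k : ℝ) - m)) ^ 2
      = ((l : ℝ) - m) ^ 2 + 4 * ((k : ℝ) - m) := Real.sq_sqrt hΔpos.le
  have hsum2 : ν₂ + ν₃ = (l : ℤ) - m := by
    have : ((ν₂ + ν₃ : ℤ) : ℝ) = (((l : ℤ) - m : ℤ) : ℝ) := by
      push_cast
      rw [hν₂, hν₃]; ring
    exact_mod_cast this
  have hprod : ν₂ * ν₃ = (m : ℤ) - k := by
    have : ((ν₂ * ν₃ : ℤ) : ℝ) = (((m : ℤ) - k : ℤ) : ℝ) := by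
      push_cast
      rw [hν₂, hν₃]
      linear_combination (-(1 : ℝ)/4) * hsq2
    exact_mod_cast this
  have hne : ν₂ ≠ ν₃ := ne_of_gt h23
  have hkey := PDSaux.key_dvd S v k l m ν₂ ν₃ hv hSk hS1 hSsym hSl hSm hsum2 hprod hne
    z hz hz1
  by_cases hzS : z ∈ S
  · rw [if_pos hzS] at hkey
    obtain ⟨t, ht⟩ := hkey
    exact hd2 ⟨t + 1, by linear_combination ht - hsum2 - hprod⟩
  · rw [if_neg hzS] at hkey
    obtain ⟨t, ht⟩ := hkey
    exact hd1 ⟨-t, by linear_combination -ht - hprod⟩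
end

section
/- No group of order 625 contains a regular (625, 246, 119, 82)-partial difference set. -/
section PDSAux
open Finset Matrix Polynomial



lemma pow_mulVec_eq {n : Type*} [Fintype n] [DecidableEq n] (M : Matrix n n ℂ) (r : ℂ)
    (v : n → ℂ) (hv : M.mulVec v = r • v) (k : ℕ) : (M ^ k).mulVec v = r ^ k • v := by
  induction k with
  | zero => simp
  | succ k ih =>
      rw [pow_succ, ← Matrix.mulVec_mulVec, hv, Matrix.mulVec_smul, ih, smul_smul, pow_succ]
      ring_nf

lemma multiset_sum_integral (s : Multiset ℂ) (h : ∀ r ∈ s, IsIntegral ℤ r) :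
    IsIntegral ℤ s.sum := by
  induction s using Multiset.induction_on with
  | empty => simpa using isIntegral_zero
  | cons a t ih =>
      rw [Multiset.sum_cons]
      exact (h a (Multiset.mem_cons_self a t)).add
        (ih fun r hr => h r (Multiset.mem_cons_of_mem hr))

lemma trace_integral_of_pow_six {n : Type*} [Fintype n] [DecidableEq n]
    (M : Matrix n n ℂ) (h : M ^ 6 = M) : IsIntegral ℤ M.trace := by
  rw [Matrix.trace_eq_sum_roots_charpoly]
  refine multiset_sum_integral _ fun r hr => ?_
  have hroot : M.charpoly.IsRoot r := isRoot_of_mem_roots hr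
  have hdet : (Matrix.scalar n r - M).det = 0 := by
    have h1 : Polynomial.eval r (charmatrix M).det
        = (Polynomial.eval (Matrix.scalar n r) (matPolyEquiv (charmatrix M))).det :=
      eval_det _ _
    rw [matPolyEquiv_charmatrix] at h1
    rw [eval_sub, eval_X, eval_C] at h1
    rw [← h1]
    exact hroot
  obtain ⟨v, hv0, hv⟩ := (Matrix.exists_mulVec_eq_zero_iff).2 hdet
  have hMv : M.mulVec v = r • v := by
    have := hv
    rw [Matrix.sub_mulVec] at this
    have hscal : (Matrix.scalar n r).mulVec v = r • v := by
      ext i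
      simp [Matrix.scalar, Matrix.mulVec_diagonal]
    rw [hscal, sub_eq_zero] at this
    exact this.symm
  have h6 : r ^ 6 = r := by
    obtain ⟨i, hi⟩ := Function.ne_iff.1 hv0
    have e1 : (M ^ 6).mulVec v = r ^ 6 • v := pow_mulVec_eq M r v hMv 6
    rw [h, hMv] at e1
    have := congrFun e1 i
    simp only [Pi.smul_apply, smul_eq_mul] at this
    have hvi : v i ≠ 0 := by simpa using hi
    field_simp at this
    exact this.symm
  refine ⟨X ^ 6 - X, monic_X_pow_sub ?_, ?_⟩
  · simpa using (Polynomial.degree_X (R := ℤ)).le.trans_lt (by norm_num)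
  · simp [eval₂_sub, h6]

lemma rat_not_integral (q : ℚ) (hq : ∀ z : ℤ, (z : ℚ) ≠ q) : ¬ IsIntegral ℤ ((q : ℂ)) := by
  intro h
  rw [show ((q : ℂ)) = algebraMap ℚ ℂ q from (eq_ratCast _ q).symm] at h
  have h2 : IsIntegral ℤ q := (isIntegral_algebraMap_iff (algebraMap ℚ ℂ).injective).1 h
  obtain ⟨z, hz⟩ := IsIntegrallyClosed.isIntegral_iff.1 h2
  exact hq z hz



lemma conv_count {G : Type*} [Group G] [Fintype G] [DecidableEq G] (S : Finset G)
    (hinv : ∀ s : G, s ∈ S ↔ s⁻¹ ∈ S) (g h : G) :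
    (Finset.univ.filter (fun x : G => g * x⁻¹ ∈ S ∧ x * h⁻¹ ∈ S)).card
      = ((S ×ˢ S).filter (fun p => p.1 * p.2⁻¹ = g * h⁻¹)).card := by
  apply Finset.card_bij (fun x _ => (g * x⁻¹, h * x⁻¹))
  · intro x hx
    rw [Finset.mem_filter] at hx
    rw [Finset.mem_filter, Finset.mem_product]
    refine ⟨⟨hx.2.1, ?_⟩, by group⟩
    have := (hinv (x * h⁻¹)).1 hx.2.2
    rwa [_root_.mul_inv_rev, inv_inv] at this
  · intro x hx y hy hxy
    have : g * x⁻¹ = g * y⁻¹ := congrArg Prod.fst hxy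
    have := mul_left_cancel this
    exact inv_injective this
  · intro p hp
    rw [Finset.mem_filter, Finset.mem_product] at hp
    refine ⟨p.1⁻¹ * g, ?_, ?_⟩
    · rw [Finset.mem_filter]
      refine ⟨Finset.mem_univ _, ?_, ?_⟩
      · simpa [_root_.mul_inv_rev] using hp.1.1
      · have h2 : p.1⁻¹ * g * h⁻¹ = p.2⁻¹ := by
          calc p.1⁻¹ * g * h⁻¹ = p.1⁻¹ * (g * h⁻¹) := by group
          _ = p.1⁻¹ * (p.1 * p.2⁻¹) := by rw [hp.2]
          _ = p.2⁻¹ := by group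
        rw [h2]
        exact (hinv p.2).1 hp.1.2
    · have h2 : h * (p.1⁻¹ * g)⁻¹ = p.2 := by
        have e2 : p.2⁻¹ = p.1⁻¹ * (g * h⁻¹) := by
          calc p.2⁻¹ = p.1⁻¹ * (p.1 * p.2⁻¹) := by group
          _ = p.1⁻¹ * (g * h⁻¹) := by rw [hp.2]
        calc h * (p.1⁻¹ * g)⁻¹ = (p.1⁻¹ * (g * h⁻¹))⁻¹ := by group
        _ = (p.2⁻¹)⁻¹ := by rw [e2]
        _ = p.2 := inv_inv _
      have h1 : g * (p.1⁻¹ * g)⁻¹ = p.1 := by group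
      rw [Prod.ext_iff]
      exact ⟨h1, h2⟩

lemma count_one {G : Type*} [Group G] [Fintype G] [DecidableEq G] (S : Finset G) :
    ((S ×ˢ S).filter (fun p => p.1 * p.2⁻¹ = 1)).card = S.card := by
  symm
  apply Finset.card_bij (fun a _ => (a, a))
  · intro a ha
    rw [Finset.mem_filter, Finset.mem_product]
    exact ⟨⟨ha, ha⟩, by group⟩
  · intro a _ b _ hab
    exact congrArg Prod.fst hab
  · intro p hp
    rw [Finset.mem_filter, Finset.mem_product] at hp
    have : p.1 = p.2 := by
      have := hp.2
      rwa [mul_inv_eq_one] at this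
    exact ⟨p.1, hp.1.1, by rw [Prod.ext_iff]; exact ⟨rfl, this⟩⟩

lemma main_aux {G : Type*} [Group G] [Fintype G] [DecidableEq G] (S : Finset G) (hv : Fintype.card G = 625)
    (hk : S.card = 246) (h1S : (1 : G) ∉ S) (hinv : ∀ s : G, s ∈ S ↔ s⁻¹ ∈ S)
    (hlam : ∀ g ∈ S, ((S ×ˢ S).filter (fun p => p.1 * p.2⁻¹ = g)).card = 119)
    (hmu : ∀ g : G, g ∉ S → g ≠ 1 →
      ((S ×ˢ S).filter (fun p => p.1 * p.2⁻¹ = g)).card = 82)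
    (z : G) (hz5 : z ^ 5 = 1) (hz1 : z ≠ 1) (hzc : ∀ g, z * g = g * z) : False := by
  classical
  set A : Matrix G G ℂ := Matrix.of (fun g h => if g * h⁻¹ ∈ S then 1 else 0) with hA
  set P : Matrix G G ℂ := Matrix.of (fun g h => if h = z * g then 1 else 0) with hP
  set J : Matrix G G ℂ := Matrix.of (fun _ _ => 1) with hJdef
  -- sum of indicator over S
  have hSsum : ∀ (f : G → Prop) (_ : DecidablePred f),
      True := fun _ _ => trivial
  -- A * A
  have hAA : A * A = (164 : ℂ) • 1 + (37 : ℂ) • A + (82 : ℂ) • J := by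
    ext g h
    rw [Matrix.mul_apply]
    have e1 : ∀ x : G, A g x * A x h
        = if (g * x⁻¹ ∈ S ∧ x * h⁻¹ ∈ S) then (1:ℂ) else 0 := by
      intro x
      by_cases h1 : g * x⁻¹ ∈ S <;> by_cases h2 : x * h⁻¹ ∈ S <;>
        simp [hA, Matrix.of_apply, h1, h2]
    rw [Finset.sum_congr rfl (fun x _ => e1 x)]
    rw [Finset.sum_boole]
    rw [show (Finset.filter (fun x => g * x⁻¹ ∈ S ∧ x * h⁻¹ ∈ S) Finset.univ).card
        = ((S ×ˢ S).filter (fun p => p.1 * p.2⁻¹ = g * h⁻¹)).card from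
      conv_count S hinv g h]
    simp only [Matrix.add_apply, Matrix.smul_apply, Matrix.one_apply, hA, hJdef,
      Matrix.of_apply, smul_eq_mul, mul_one, mul_ite, mul_zero, mul_one]
    by_cases hgh : g = h
    · subst hgh
      rw [show g * g⁻¹ = 1 by group, count_one S, hk]
      simp [h1S]
      norm_num
    · have hne : g * h⁻¹ ≠ 1 := by
        intro hcon; exact hgh (by rwa [mul_inv_eq_one] at hcon)
      by_cases hmem : g * h⁻¹ ∈ S
      · rw [hlam _ hmem]
        simp [hmem, hgh]
        norm_num
      · rw [hmu _ hmem hne]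
        simp [hmem, hgh]

  -- indicator sum
  have hsumS : (∑ y : G, if y ∈ S then (1:ℂ) else 0) = 246 := by
    rw [Finset.sum_boole, Finset.filter_univ_mem, hk]
    norm_num
  have hAJ : A * J = (246 : ℂ) • J := by
    ext g h
    rw [Matrix.mul_apply]
    have e1 : ∀ x : G, A g x * J x h = if g * x⁻¹ ∈ S then (1:ℂ) else 0 := fun x => by
      simp [hA, hJdef]
    rw [Finset.sum_congr rfl fun x _ => e1 x]
    rw [show (∑ x : G, if g * x⁻¹ ∈ S then (1:ℂ) else 0)
        = ∑ y : G, if y ∈ S then (1:ℂ) else 0 from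
      Fintype.sum_equiv ((Equiv.inv G).trans (Equiv.mulLeft g)) _ _ (fun x => by simp)]
    rw [hsumS]
    simp [hJdef]
  have hJA : J * A = (246 : ℂ) • J := by
    ext g h
    rw [Matrix.mul_apply]
    have e1 : ∀ x : G, J g x * A x h = if x * h⁻¹ ∈ S then (1:ℂ) else 0 := fun x => by
      simp [hA, hJdef]
    rw [Finset.sum_congr rfl fun x _ => e1 x]
    rw [show (∑ x : G, if x * h⁻¹ ∈ S then (1:ℂ) else 0)
        = ∑ y : G, if y ∈ S then (1:ℂ) else 0 from
      Fintype.sum_equiv (Equiv.mulRight h⁻¹) _ _ (fun x => by simp; congr)]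
    rw [hsumS]
    simp [hJdef]
  have hJJ : J * J = (625 : ℂ) • J := by
    ext g h
    rw [Matrix.mul_apply]
    simp [hJdef, Finset.card_univ, hv]
  have hPA : P * A = A * P := by
    ext g h
    rw [Matrix.mul_apply, Matrix.mul_apply]
    have l : (∑ x : G, P g x * A x h) = A (z * g) h := by
      have e1 : ∀ x : G, P g x * A x h = if x = z * g then A x h else 0 := fun x => by
        simp only [hP, Matrix.of_apply]
        split_ifs <;> simp
      rw [Finset.sum_congr rfl fun x _ => e1 x, Finset.sum_ite_eq' Finset.univ (z * g)]
      simp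
    have r : (∑ x : G, A g x * P x h) = A g (z⁻¹ * h) := by
      have e1 : ∀ x : G, A g x * P x h = if x = z⁻¹ * h then A g x else 0 := fun x => by
        simp only [hP, Matrix.of_apply]
        have hc : (h = z * x) ↔ (x = z⁻¹ * h) := by
          constructor
          · intro hh; rw [hh]; group
          · intro hh; rw [hh]; group
        simp only [hc, mul_ite, mul_one, mul_zero]
      rw [Finset.sum_congr rfl fun x _ => e1 x, Finset.sum_ite_eq' Finset.univ (z⁻¹ * h)]
      simp
    rw [l, r]
    have key : z * g * h⁻¹ = g * (z⁻¹ * h)⁻¹ := by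
      have e3 : g * (z⁻¹ * h)⁻¹ = g * (h⁻¹ * z) := by group
      rw [e3]
      calc z * g * h⁻¹ = z * (g * h⁻¹) := by group
      _ = (g * h⁻¹) * z := hzc _
      _ = g * (h⁻¹ * z) := by group
    simp [hA, key]
  have hPJ : P * J = J := by
    ext g h
    rw [Matrix.mul_apply]
    have e1 : ∀ x : G, P g x * J x h = if x = z * g then (1:ℂ) else 0 := fun x => by
      simp [hP, hJdef]
    rw [Finset.sum_congr rfl fun x _ => e1 x, Finset.sum_ite_eq' Finset.univ (z * g)]
    simp [hJdef]
  have hJP : J * P = J := by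
    ext g h
    rw [Matrix.mul_apply]
    have e1 : ∀ x : G, J g x * P x h = if x = z⁻¹ * h then (1:ℂ) else 0 := fun x => by
      simp only [hP, hJdef, Matrix.of_apply, one_mul]
      have hc : (h = z * x) ↔ (x = z⁻¹ * h) := by
        constructor
        · intro hh; rw [hh]; group
        · intro hh; rw [hh]; group
      simp only [hc]
    rw [Finset.sum_congr rfl fun x _ => e1 x, Finset.sum_ite_eq' Finset.univ (z⁻¹ * h)]
    simp [hJdef]
  have hPk : ∀ k : ℕ, P ^ (k+1) = Matrix.of (fun g h => if h = z^(k+1) * g then (1:ℂ) else 0) := by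
    intro k
    induction k with
    | zero => ext g h; simp [pow_one, hP]
    | succ k ih =>
        rw [pow_succ, ih]
        ext g h
        rw [Matrix.mul_apply]
        have e1 : ∀ x : G,
            Matrix.of (fun g h => if h = z^(k+1) * g then (1:ℂ) else 0) g x * P x h
            = if x = z⁻¹ * h then (if x = z^(k+1) * g then (1:ℂ) else 0) else 0 := fun x => by
          simp only [hP, Matrix.of_apply]
          have hc : (h = z * x) ↔ (x = z⁻¹ * h) := by
            constructor
            · intro hh; rw [hh]; group
            · intro hh; rw [hh]; group
          simp only [hc, mul_ite, mul_one, mul_zero, ite_self]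
        rw [Finset.sum_congr rfl fun x _ => e1 x, Finset.sum_ite_eq' Finset.univ (z⁻¹ * h)]
        simp only [Finset.mem_univ, if_true, Matrix.of_apply]
        have : (z⁻¹ * h = z^(k+1) * g) ↔ (h = z^(k+1+1) * g) := by
          constructor
          · intro hh
            have : h = z * (z^(k+1) * g) := by rw [← hh]; group
            rw [this, ← mul_assoc, ← pow_succ']
          · intro hh
            rw [hh, pow_succ']
            group
        simp [this]
  have hP5 : P ^ 5 = 1 := by
    rw [show (5:ℕ) = 4 + 1 from rfl, hPk 4]
    ext g h
    rw [show (4:ℕ)+1 = 5 from rfl, hz5]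
    simp [Matrix.one_apply, eq_comm]
  have hP6 : P ^ 6 = P := by
    rw [show (6:ℕ) = 5 + 1 from rfl, pow_succ, hP5, one_mul]
  -- the projection-related matrix B
  set B : Matrix G G ℂ := A + (4:ℂ) • (1 : Matrix G G ℂ) - (2/5 : ℂ) • J with hB
  have hBB : B * B = (45 : ℂ) • B := by
    rw [hB]
    simp only [mul_add, add_mul, mul_sub, sub_mul, smul_mul_assoc, mul_smul_comm,
      mul_one, one_mul, hAA, hAJ, hJA, hJJ]
    module
  have hPB : P * B = B * P := by
    rw [hB]
    simp only [mul_add, add_mul, mul_sub, sub_mul, smul_mul_assoc, mul_smul_comm,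
      mul_one, one_mul, hPA, hPJ, hJP]
  set E : Matrix G G ℂ := (45 : ℂ)⁻¹ • B with hE
  have hPE : P * E = E * P := by
    rw [hE, mul_smul_comm, smul_mul_assoc, hPB]
  have hEE : E * E = E := by
    rw [hE, smul_mul_assoc, mul_smul_comm, hBB, smul_smul, smul_smul]
    norm_num
  have hMk : ∀ k : ℕ, (P * E) ^ (k+1) = P ^ (k+1) * E := by
    intro k
    induction k with
    | zero => rw [pow_one, pow_one]
    | succ k ih =>
        rw [pow_succ, ih, mul_assoc, ← mul_assoc E P E, ← hPE, mul_assoc P E E, hEE,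
          ← mul_assoc, ← pow_succ]
  have hM6 : (P * E) ^ 6 = P * E := by
    rw [show (6:ℕ) = 5 + 1 from rfl, hMk 5, show (5:ℕ)+1 = 6 from rfl, hP6]
  -- traces
  have htrP : P.trace = 0 := by
    unfold Matrix.trace
    simp [Matrix.diag, hP, right_eq_mul, hz1]
  have htrPA : (P * A).trace = if z ∈ S then (625:ℂ) else 0 := by
    unfold Matrix.trace
    have e2 : ∀ g : G, (P * A) g g = if z ∈ S then (1:ℂ) else 0 := by
      intro g
      rw [Matrix.mul_apply]
      have e1 : ∀ x : G, P g x * A x g = if x = z * g then A x g else 0 := fun x => by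
        simp only [hP, Matrix.of_apply]
        split_ifs <;> simp
      rw [Finset.sum_congr rfl fun x _ => e1 x, Finset.sum_ite_eq' Finset.univ (z * g)]
      simp only [Finset.mem_univ, if_true, hA, Matrix.of_apply]
      rw [show z * g * g⁻¹ = z by group]
    rw [show (∑ g : G, Matrix.diag (P * A) g) = ∑ g : G, if z ∈ S then (1:ℂ) else 0 from
      Finset.sum_congr rfl fun g _ => e2 g]
    rw [Finset.sum_const, Finset.card_univ, hv]
    split_ifs <;> simp
  have htrJ : J.trace = 625 := by
    unfold Matrix.trace
    simp [Matrix.diag, hJdef, Finset.card_univ, hv]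
  have htrPJ : (P * J).trace = 625 := by rw [hPJ, htrJ]
  have htr1 : (1 : Matrix G G ℂ).trace = 625 := by
    rw [Matrix.trace_one, hv]
    norm_num
  -- trace of P * E
  have htrPE : (P * E).trace = (45:ℂ)⁻¹ * ((if z ∈ S then (625:ℂ) else 0) + 4 * 0 - (2/5) * 625) := by
    rw [hE, mul_smul_comm, Matrix.trace_smul, hB]
    rw [mul_sub, mul_add, Matrix.trace_sub, Matrix.trace_add]
    rw [mul_smul_comm, mul_smul_comm, Matrix.trace_smul, Matrix.trace_smul, mul_one]
    rw [htrPA, htrP, htrPJ]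
    simp
  have hint : IsIntegral ℤ (P * E).trace := trace_integral_of_pow_six _ hM6
  by_cases hzS : z ∈ S
  · rw [htrPE, if_pos hzS] at hint
    have heq : ((45:ℂ)⁻¹ * ((625:ℂ) + 4 * 0 - 2/5 * 625)) = ((25/3 : ℚ) : ℂ) := by norm_num
    rw [heq] at hint
    refine rat_not_integral (25/3) (fun w hw => ?_) hint
    have h2 : (w : ℚ) * 3 = 25 := by rw [hw]; norm_num
    have h3 : w * 3 = 25 := by exact_mod_cast h2
    omega
  · rw [htrPE, if_neg hzS] at hint
    have heq : ((45:ℂ)⁻¹ * ((0:ℂ) + 4 * 0 - 2/5 * 625)) = ((-50/9 : ℚ) : ℂ) := by norm_num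
    rw [heq] at hint
    refine rat_not_integral (-50/9) (fun w hw => ?_) hint
    have h2 : (w : ℚ) * 9 = -50 := by rw [hw]; norm_num
    have h3 : w * 9 = -50 := by exact_mod_cast h2
    omega



/-- No group of order 625 contains a regular `(625, 246, 119, 82)`-partial
difference set. -/
theorem no_pds_625 {G : Type*} [Group G] [Fintype G] [DecidableEq G]
    (hv : Fintype.card G = 625) :
    ¬ ∃ S : Finset G, IsRegularPDS S 625 246 119 82 := by
  rintro ⟨S, _, hk, h1S, hinv, hlam, hmu⟩
  haveI : Fact (Nat.Prime 5) := ⟨by norm_num⟩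
  have hp : IsPGroup 5 G := IsPGroup.of_card
    (show Nat.card G = 5 ^ 4 by rw [Nat.card_eq_fintype_card, hv]; norm_num)
  haveI : Nontrivial G := Fintype.one_lt_card_iff_nontrivial.1 (by rw [hv]; norm_num)
  haveI := IsPGroup.center_nontrivial hp
  have hdvd : Fintype.card (Subgroup.center G) ∣ 5 ^ 4 := by
    have h1 := Subgroup.card_subgroup_dvd_card (Subgroup.center G)
    rw [Nat.card_eq_fintype_card, Nat.card_eq_fintype_card, hv] at h1
    exact h1.trans (by norm_num)
  have h5 : 5 ∣ Fintype.card (Subgroup.center G) := by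
    obtain ⟨i, hi, he⟩ := (Nat.dvd_prime_pow (by norm_num : Nat.Prime 5)).1 hdvd
    have hne : Fintype.card (Subgroup.center G) ≠ 1 := Fintype.one_lt_card.ne'
    rcases i with _ | i
    · simp at he; exact absurd he hne
    · rw [he, pow_succ]
      exact dvd_mul_left 5 (5 ^ i)
  obtain ⟨z0, hz0⟩ := exists_prime_orderOf_dvd_card 5 h5
  set z : G := (z0 : G) with hzdef
  have hordz : orderOf z = 5 := by
    have := orderOf_injective (Subgroup.center G).subtype
      (Subgroup.subtype_injective _) z0
    simp only [Subgroup.coe_subtype] at this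
    rw [hzdef, this]
    exact hz0
  have hz5 : z ^ 5 = 1 := by rw [← hordz]; exact pow_orderOf_eq_one z
  have hz1 : z ≠ 1 := by
    intro h
    rw [h, orderOf_one] at hordz
    norm_num at hordz
  have hzc : ∀ g : G, z * g = g * z := fun g =>
    (Subgroup.mem_center_iff.1 z0.2 g).symm
  exact main_aux S hv hk h1S hinv hlam hmu z hz5 hz1 hzc

end PDSAux
end
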